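/- Let Ω be a finite set with |Ω| = n, and let α ∈ (0,1) be such that α·n and 1/α are positive integers. Every model-agnostic watermarking scheme (η, {𝒫_ρ}) of level α on Ω has maximum Type II error loss γ(η) = max_ρ ( β(𝒫_ρ) − Σ_{x∈Ω}(ρ(x) − α)_+ ) at least C(n − 1/α, αn)/C(n, αn), where C(·,·) denotes the binomial coefficient. -/

import Mathlib

open Finset

noncomputable section

/-- The marginal distribution of the output `X` under a joint distribution `P`
on `Ω × 2^Ω`. -/
def marginalX {Ω : Type*} [Fintype Ω] [DecidableEq Ω]
    (P : Ω × Finset Ω → ℝ) (x : Ω) : ℝ :=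
  ∑ R : Finset Ω, P (x, R)

/-- The marginal distribution of the rejection region `R` under a joint
distribution `P` on `Ω × 2^Ω`. -/
def marginalR {Ω : Type*} [Fintype Ω] [DecidableEq Ω]
    (P : Ω × Finset Ω → ℝ) (R : Finset Ω) : ℝ :=
  ∑ x, P (x, R)

/-- Type II error of a watermarking scheme: the probability that `X ∉ R`. -/
def typeII {Ω : Type*} [Fintype Ω] [DecidableEq Ω]
    (P : Ω × Finset Ω → ℝ) : ℝ :=
  ∑ p : Ω × Finset Ω, if p.1 ∉ p.2 then P p else 0

/-- Every model-agnostic watermarking scheme `(η, {Pfam_ρ})` of level `α` on `Ω`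
(`|Ω| = n`, `αn` and `1/α` positive integers) has maximum Type II error loss
`γ(η) = sup_ρ (β(Pfam_ρ) − ∑_x (ρ(x) − α)₊)` at least
`C(n − 1/α, αn) / C(n, αn)`. -/

lemma auxA (c m : ℕ) (hm : 1 ≤ m) : ∀ d : ℕ, c.choose m ≤ (c - d).choose m + (c-1).choose (m-1) * d := by
  obtain ⟨k, rfl⟩ : ∃ k, m = k + 1 := ⟨m-1, by omega⟩
  simp only [Nat.add_sub_cancel]
  intro d
  induction d with
  | zero => simp
  | succ d ih =>
    have key : (c - d).choose (k+1) ≤ (c - (d+1)).choose (k+1) + (c-1).choose k := by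
      rcases Nat.eq_zero_or_pos (c - d) with h | h
      · have h2 : c - (d+1) = 0 := by omega
        rw [h, h2, Nat.choose_eq_zero_of_lt (by omega)]
        exact Nat.zero_le _
      · have h1 : c - d = (c - (d+1)) + 1 := by omega
        rw [h1, Nat.choose_succ_succ]
        simp only [Nat.succ_eq_add_one]
        have h3 : (c - (d+1)).choose k ≤ (c-1).choose k :=
          Nat.choose_le_choose _ (by omega)
        omega
    have : (c-1).choose k * (d+1) = (c-1).choose k * d + (c-1).choose k := by ring
    omega

lemma auxB (c m : ℕ) (hm : 1 ≤ m) : ∀ d : ℕ, c.choose m + (c-1).choose (m-1) * d ≤ (c + d).choose m := by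
  obtain ⟨k, rfl⟩ : ∃ k, m = k + 1 := ⟨m-1, by omega⟩
  simp only [Nat.add_sub_cancel]
  intro d
  induction d with
  | zero => simp
  | succ d ih =>
    have key : (c + d).choose (k+1) + (c-1).choose k ≤ (c + (d+1)).choose (k+1) := by
      have h1 : c + (d+1) = (c + d) + 1 := by omega
      rw [h1, Nat.choose_succ_succ]
      simp only [Nat.succ_eq_add_one]
      have h3 : (c-1).choose k ≤ (c+d).choose k :=
        Nat.choose_le_choose _ (by omega)
      omega
    have : (c-1).choose k * (d+1) = (c-1).choose k * d + (c-1).choose k := by ring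
    omega

lemma auxC (n a m : ℕ) (han : a ≤ n) (hm : 1 ≤ m) (r : ℕ) :
    ((n-a).choose m : ℝ) - ((n-a-1).choose (m-1) : ℝ) * ((r:ℝ) - (a:ℝ)) ≤ ((n - r).choose m : ℝ) := by
  rcases le_or_gt a r with h | h
  · have hd : n - r = (n-a) - (r-a) := by omega
    have hA := auxA (n-a) m hm (r - a)
    have hc : ((r:ℝ) - (a:ℝ)) = ((r - a : ℕ) : ℝ) := by
      rw [Nat.cast_sub h]
    rw [hd, hc]
    have : ((n-a).choose m : ℝ) ≤ (((n-a) - (r-a)).choose m : ℝ) + ((n-a-1).choose (m-1) : ℝ) * ((r-a : ℕ) : ℝ) := by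
      exact_mod_cast hA
    linarith
  · have hd : n - r = (n-a) + (a-r) := by omega
    have hB := auxB (n-a) m hm (a - r)
    have hc : ((r:ℝ) - (a:ℝ)) = -((a - r : ℕ) : ℝ) := by
      rw [Nat.cast_sub h.le]; ring
    rw [hd, hc]
    have : ((n-a).choose m : ℝ) + ((n-a-1).choose (m-1) : ℝ) * ((a-r : ℕ) : ℝ) ≤ (((n-a) + (a-r)).choose m : ℝ) := by
      exact_mod_cast hB
    linarith

lemma auxID (n a m : ℕ) (ha : 0 < a) (hm : 0 < m) :
    (n-m).choose a * n.choose m = (n-a).choose m * n.choose a := by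
  rcases le_or_gt (a+m) n with hle | hlt
  · have h1 := Nat.choose_mul (n := n) (k := a+m) (s := m) (by omega)
    have h2 := Nat.choose_mul (n := n) (k := a+m) (s := a) (by omega)
    have h3 : (a+m).choose m = (a+m).choose a := by
      rw [Nat.add_comm a m, Nat.choose_symm_add]
    have h4 : a + m - m = a := by omega
    have h5 : a + m - a = m := by omega
    rw [h4] at h1
    rw [h5] at h2
    rw [h3] at h1
    calc (n-m).choose a * n.choose m = n.choose m * (n-m).choose a := by ring
    _ = n.choose (a+m) * (a+m).choose a := h1.symm
    _ = n.choose a * (n-a).choose m := h2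
    _ = (n-a).choose m * n.choose a := by ring
  · rw [Nat.choose_eq_zero_of_lt (by omega : n - m < a), Nat.choose_eq_zero_of_lt (by omega : n - a < m)]
    simp

theorem stmt_6 {Ω : Type*} [Fintype Ω] [DecidableEq Ω] [Nonempty Ω]
    (α : ℝ) (hα : α ∈ Set.Ioo (0 : ℝ) 1)
    (a m : ℕ) (ha0 : 0 < a) (hm0 : 0 < m)
    (ha : (a : ℝ) = α * Fintype.card Ω) (hm : (m : ℝ) = 1 / α)
    (η : Finset Ω → ℝ)
    (Pfam : (Ω → ℝ) → Ω × Finset Ω → ℝ)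
    (hscheme : ∀ ρ : Ω → ℝ, (∀ x, 0 ≤ ρ x) → (∑ x, ρ x = 1) →
      (∀ p, 0 ≤ Pfam ρ p) ∧ (∑ p, Pfam ρ p = 1) ∧
      marginalX (Pfam ρ) = ρ ∧ marginalR (Pfam ρ) = η ∧
      (∀ y : Ω, (∑ p : Ω × Finset Ω, if y ∈ p.2 then Pfam ρ p else 0) ≤ α)) :
    ((Fintype.card Ω - m).choose a : ℝ) / ((Fintype.card Ω).choose a : ℝ) ≤
      sSup {t : ℝ | ∃ ρ : Ω → ℝ, (∀ x, 0 ≤ ρ x) ∧ (∑ x, ρ x = 1) ∧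
        t = typeII (Pfam ρ) - ∑ x, max (ρ x - α) 0} := by
  obtain ⟨hα0, hα1⟩ := hα
  set n := Fintype.card Ω with hn
  set T := {t : ℝ | ∃ ρ : Ω → ℝ, (∀ x, 0 ≤ ρ x) ∧ (∑ x, ρ x = 1) ∧
        t = typeII (Pfam ρ) - ∑ x, max (ρ x - α) 0} with hT
  have hn0 : 0 < n := Fintype.card_pos
  have hαm : α * m = 1 := by rw [hm]; field_simp
  have hnam : (a : ℝ) * m = n := by rw [ha]; nlinarith [hαm]
  have ham : a * m = n := by exact_mod_cast hnam
  have hm2 : 2 ≤ m := by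
    by_contra h
    have hm1 : m = 1 := by omega
    rw [hm1] at hm
    have : α = 1 := by field_simp at hm; norm_num at hm; linarith
    linarith
  have han : a < n := by
    have := Nat.mul_le_mul_left a hm2
    omega
  have hmlen : m ≤ n := by
    have := Nat.mul_le_mul_right m ha0
    omega
  -- η facts from the uniform distribution
  have hρ0nn : ∀ x : Ω, 0 ≤ (fun _ : Ω => (n:ℝ)⁻¹) x := fun x => by positivity
  have hρ0sum : ∑ _x : Ω, (n:ℝ)⁻¹ = 1 := by
    rw [Finset.sum_const, Finset.card_univ, ← hn, nsmul_eq_mul]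
    field_simp
  obtain ⟨hP0, hP1, hPX, hPR, hPI⟩ := hscheme (fun _ => (n:ℝ)⁻¹) hρ0nn hρ0sum
  have hη0 : ∀ R, 0 ≤ η R := fun R => by
    rw [← hPR]; exact Finset.sum_nonneg fun x _ => hP0 _
  have hη1 : ∑ R : Finset Ω, η R = 1 := by
    have e : ∑ R : Finset Ω, η R = ∑ R : Finset Ω, ∑ x, Pfam (fun _ => (n:ℝ)⁻¹) (x, R) := by
      refine Finset.sum_congr rfl fun R _ => ?_
      rw [← hPR]; rfl
    rw [e, ← hP1, Fintype.sum_prod_type, Finset.sum_comm]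
  have hηb : ∑ R : Finset Ω, (R.card : ℝ) * η R ≤ (a : ℝ) := by
    have h1 : ∑ y : Ω, (∑ p : Ω × Finset Ω, if y ∈ p.2 then Pfam (fun _ => (n:ℝ)⁻¹) p else 0) ≤ (n:ℝ) * α := by
      calc ∑ y : Ω, (∑ p : Ω × Finset Ω, if y ∈ p.2 then Pfam (fun _ => (n:ℝ)⁻¹) p else 0)
          ≤ ∑ _y : Ω, α := Finset.sum_le_sum fun y _ => hPI y
        _ = (n:ℝ) * α := by
            rw [Finset.sum_const, Finset.card_univ, ← hn, nsmul_eq_mul]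
    have h2 : ∑ y : Ω, (∑ p : Ω × Finset Ω, if y ∈ p.2 then Pfam (fun _ => (n:ℝ)⁻¹) p else 0)
        = ∑ R : Finset Ω, (R.card : ℝ) * η R := by
      rw [Finset.sum_comm]
      have e1 : ∀ p : Ω × Finset Ω, (∑ y : Ω, if y ∈ p.2 then Pfam (fun _ => (n:ℝ)⁻¹) p else 0)
          = (p.2.card : ℝ) * Pfam (fun _ => (n:ℝ)⁻¹) p := by
        intro p
        rw [Finset.sum_ite_mem, Finset.univ_inter, Finset.sum_const, nsmul_eq_mul]
      rw [Finset.sum_congr rfl fun p _ => e1 p, Fintype.sum_prod_type, Finset.sum_comm]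
      refine Finset.sum_congr rfl fun R _ => ?_
      show (∑ x : Ω, ((R.card : ℝ) * Pfam (fun _ => (n:ℝ)⁻¹) (x, R))) = (R.card : ℝ) * η R
      rw [← Finset.mul_sum, ← hPR]
      rfl
    have hna : (n:ℝ) * α = a := by rw [ha]; ring
    linarith [h1, h2.symm.le, h2.le]
  -- bounded above
  have hbdd : BddAbove T := by
    refine ⟨1, fun t ht => ?_⟩
    obtain ⟨ρ, hρnn, hρsum, rfl⟩ := ht
    obtain ⟨hQ0, hQ1, -, -, -⟩ := hscheme ρ hρnn hρsum
    have h1 : typeII (Pfam ρ) ≤ 1 := by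
      rw [← hQ1]
      refine Finset.sum_le_sum fun p _ => ?_
      split
      · exact le_refl _
      · exact hQ0 p
    have h2 : 0 ≤ ∑ x, max (ρ x - α) 0 :=
      Finset.sum_nonneg fun x _ => le_max_right _ _
    linarith
  -- per-S key bound
  have key : ∀ S : Finset Ω, S ∈ Finset.univ.powersetCard m →
      ∃ t ∈ T, (∑ R : Finset Ω, if Disjoint R S then η R else 0) ≤ t := by
    intro S hS
    rw [Finset.mem_powersetCard] at hS
    obtain ⟨-, hcard⟩ := hS
    set ρS : Ω → ℝ := fun x => if x ∈ S then α else 0 with hρS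
    have hnn : ∀ x, 0 ≤ ρS x := by
      intro x; dsimp only [ρS]; split
      · exact hα0.le
      · exact le_refl _
    have hsum : ∑ x, ρS x = 1 := by
      dsimp only [ρS]
      rw [Finset.sum_ite_mem, Finset.univ_inter, Finset.sum_const, hcard, nsmul_eq_mul, mul_comm]
      exact hαm
    obtain ⟨hQ0, hQ1, hQX, hQR, -⟩ := hscheme ρS hnn hsum
    refine ⟨typeII (Pfam ρS), ⟨ρS, hnn, hsum, ?_⟩, ?_⟩
    · have hz : ∑ x, max (ρS x - α) 0 = 0 := by
        refine Finset.sum_eq_zero fun x _ => ?_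
        dsimp only [ρS]; split
        · simp
        · rw [zero_sub, max_eq_right (by linarith : -α ≤ (0:ℝ))]
      rw [hz, sub_zero]
    · have hQzero : ∀ x (R : Finset Ω), x ∉ S → Pfam ρS (x, R) = 0 := by
        intro x R hx
        have hle : Pfam ρS (x, R) ≤ marginalX (Pfam ρS) x :=
          Finset.single_le_sum (f := fun R' => Pfam ρS (x, R')) (fun R' _ => hQ0 _)
            (Finset.mem_univ R)
        rw [hQX] at hle
        have hz : ρS x = 0 := by dsimp only [ρS]; rw [if_neg hx]
        have := hQ0 (x, R)
        rw [hz] at hle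
        linarith
      have expand : typeII (Pfam ρS)
          = ∑ R : Finset Ω, ∑ x : Ω, (if x ∉ R then Pfam ρS (x, R) else 0) := by
        unfold typeII
        rw [Fintype.sum_prod_type, Finset.sum_comm]
      rw [expand]
      refine Finset.sum_le_sum fun R _ => ?_
      by_cases hD : Disjoint R S
      · rw [if_pos hD, ← hQR]
        have e : marginalR (Pfam ρS) R = ∑ x, Pfam ρS (x, R) := rfl
        rw [e]
        refine Finset.sum_le_sum fun x _ => ?_
        by_cases hx : x ∈ R
        · rw [if_neg (by simp [hx])]
          rw [hQzero x R (Finset.disjoint_left.mp hD hx)]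
        · rw [if_pos hx]
      · rw [if_neg hD]
        refine Finset.sum_nonneg fun x _ => ?_
        split
        · exact hQ0 _
        · exact le_refl _
  -- counting
  have count : ∀ R : Finset Ω,
      (∑ S ∈ Finset.univ.powersetCard m, (if Disjoint R S then (1:ℝ) else 0))
        = ((n - R.card).choose m : ℝ) := by
    intro R
    rw [Finset.sum_boole]
    have e : (Finset.univ.powersetCard m).filter (fun S => Disjoint R S)
        = Rᶜ.powersetCard m := by
      ext S
      simp only [Finset.mem_filter, Finset.mem_powersetCard, Finset.subset_univ, true_and]
      constructor
      · rintro ⟨hc, hD⟩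
        refine ⟨fun x hx => Finset.mem_compl.mpr (Finset.disjoint_right.mp hD hx), hc⟩
      · rintro ⟨hsub, hc⟩
        refine ⟨hc, Finset.disjoint_right.mpr fun x hx => ?_⟩
        exact Finset.mem_compl.mp (hsub hx)
    rw [e, Finset.card_powersetCard, Finset.card_compl]
  -- averaging
  have havg : ((n-a).choose m : ℝ) ≤ ∑ S ∈ Finset.univ.powersetCard m,
      (∑ R : Finset Ω, if Disjoint R S then η R else 0) := by
    rw [Finset.sum_comm]
    have step1 : ∀ R : Finset Ω,
        (∑ S ∈ Finset.univ.powersetCard m, if Disjoint R S then η R else 0)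
          = η R * ((n - R.card).choose m : ℝ) := by
      intro R
      rw [← count R, Finset.mul_sum]
      refine Finset.sum_congr rfl fun S _ => ?_
      split <;> ring
    rw [Finset.sum_congr rfl fun R _ => step1 R]
    have step2 : ∀ R : Finset Ω,
        η R * (((n-a).choose m : ℝ) - ((n-a-1).choose (m-1) : ℝ) * ((R.card:ℝ) - (a:ℝ)))
          ≤ η R * ((n - R.card).choose m : ℝ) := fun R =>
      mul_le_mul_of_nonneg_left (auxC n a m han.le hm0 R.card) (hη0 R)
    have e1 : ∀ R : Finset Ω,
        η R * (((n-a).choose m : ℝ) - ((n-a-1).choose (m-1) : ℝ) * ((R.card:ℝ) - (a:ℝ)))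
          = ((n-a).choose m : ℝ) * η R + (((n-a-1).choose (m-1) : ℝ) * a) * η R
            - ((n-a-1).choose (m-1) : ℝ) * ((R.card:ℝ) * η R) := fun R => by ring
    have step3 : ((n-a).choose m : ℝ) ≤ ∑ R : Finset Ω,
        η R * (((n-a).choose m : ℝ) - ((n-a-1).choose (m-1) : ℝ) * ((R.card:ℝ) - (a:ℝ))) := by
      rw [Finset.sum_congr rfl fun R _ => e1 R, Finset.sum_sub_distrib, Finset.sum_add_distrib,
        ← Finset.mul_sum, ← Finset.mul_sum, ← Finset.mul_sum, hη1]
      have hW : (0:ℝ) ≤ ((n-a-1).choose (m-1) : ℝ) := Nat.cast_nonneg _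
      have := mul_le_mul_of_nonneg_left hηb hW
      linarith
    calc ((n-a).choose m : ℝ)
        ≤ ∑ R : Finset Ω, η R * (((n-a).choose m : ℝ)
            - ((n-a-1).choose (m-1) : ℝ) * ((R.card:ℝ) - (a:ℝ))) := step3
      _ ≤ ∑ R : Finset Ω, η R * ((n - R.card).choose m : ℝ) :=
          Finset.sum_le_sum fun R _ => step2 R
  -- pick a good S
  have hNpos : (0:ℝ) < ((n.choose m : ℕ) : ℝ) := by exact_mod_cast Nat.choose_pos hmlen
  have hcardpcs : (Finset.univ.powersetCard m : Finset (Finset Ω)).card = n.choose m := by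
    rw [Finset.card_powersetCard, Finset.card_univ]
  have hne : (Finset.univ.powersetCard m : Finset (Finset Ω)).Nonempty := by
    rw [← Finset.card_pos, hcardpcs]; exact Nat.choose_pos hmlen
  obtain ⟨S0, hS0mem, hS0⟩ := Finset.exists_le_of_sum_le
    (f := fun _ => ((n-a).choose m : ℝ) / ((n.choose m : ℕ) : ℝ))
    (g := fun S => ∑ R : Finset Ω, if Disjoint R S then η R else 0) hne
    (by
      rw [Finset.sum_const, hcardpcs, nsmul_eq_mul, mul_comm,
        div_mul_cancel₀ _ hNpos.ne']
      exact havg)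
  obtain ⟨t, htmem, hGt⟩ := key S0 hS0mem
  have final : ((n-a).choose m : ℝ) / ((n.choose m : ℕ) : ℝ) ≤ sSup T :=
    le_trans (le_trans hS0 hGt) (le_csSup hbdd htmem)
  have hapos : (0:ℝ) < ((n.choose a : ℕ) : ℝ) := by exact_mod_cast Nat.choose_pos han.le
  have hratio : ((n - m).choose a : ℝ) / ((n.choose a : ℕ) : ℝ)
      = ((n-a).choose m : ℝ) / ((n.choose m : ℕ) : ℝ) := by
    rw [div_eq_div_iff hapos.ne' hNpos.ne']
    exact_mod_cast auxID n a m ha0 hm0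
  rw [hratio]
  exact final
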